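/- Let k_1, k_2 ≥ 1 and s_1 ≥ 1, and set k := k_1 + s_1(k_2−1). A homogeneous polynomial P ∈ ℂ[x,y] of degree k−1 lies in F((k_1,k_2),(s_1,1)) if and only if there exists a homogeneous polynomial D ∈ ℂ[x,y] of degree ≥ s_1(k_2−1), all of whose monomials involve only x^{s_1} and y^{s_1}, such that D divides every component of σ_{s_1}(P). -/

import Mathlib

/-- All monomials of `P` involve only `x^s` and `y^s`. -/
def MonoS (s : ℕ) (P : MvPolynomial (Fin 2) ℂ) : Prop :=
  ∀ m ∈ P.support, s ∣ m 0 ∧ s ∣ m 1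

/-- `S ℓ = s_1 ⋯ s_{ℓ-1}` (0-indexed: `Sp s i = ∏_{j<i} s j`, so `Sp s 0 = 1`). -/
def Sp (s : ℕ → ℕ) (i : ℕ) : ℕ := ∏ j ∈ Finset.range i, s j

/-- `F(k,s)`: homogeneous polynomials of degree `k-1` admitting a factorization
`P = P_L ⋯ P_1`, where `P_ℓ` is homogeneous of degree `S_ℓ(k_ℓ-1)` with all monomials
in `x^{S_ℓ}, y^{S_ℓ}` (layers are 0-indexed here). -/
def Fset (L : ℕ) (k s : ℕ → ℕ) : Set (MvPolynomial (Fin 2) ℂ) :=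
  { P | ∃ Q : ℕ → MvPolynomial (Fin 2) ℂ, P = ∏ i ∈ Finset.range L, Q i ∧
      ∀ i < L, (Q i).IsHomogeneous (Sp s i * (k i - 1)) ∧ MonoS (Sp s i) (Q i) }

/-- `p` is the `s`-decomposition `σ_s(P)` of the homogeneous polynomial `P` of degree `m`. -/
def IsSigma (s m : ℕ) (P : MvPolynomial (Fin 2) ℂ)
    (p : Fin s → MvPolynomial (Fin 2) ℂ) : Prop :=
  (∀ i : Fin s, (p i).IsHomogeneous (s * ((m - i.val) / s)) ∧ MonoS s (p i) ∧
      (m < i.val → p i = 0)) ∧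
  P = ∑ i : Fin s,
    MvPolynomial.X 0 ^ i.val * MvPolynomial.X 1 ^ ((m - i.val) % s) * p i


section Helpers
open MvPolynomial

lemma deg2 (d : Fin 2 →₀ ℕ) : d.degree = d 0 + d 1 := by
  have h := Finset.sum_subset (Finset.subset_univ d.support)
    (fun i _ h => Finsupp.notMem_support_iff.mp h)
  rw [Finsupp.degree_apply, h, Fin.sum_univ_two]

lemma mono2 (a b : ℕ) (c : ℂ) :
    (monomial (Finsupp.single 0 a + Finsupp.single 1 b) c : MvPolynomial (Fin 2) ℂ)
      = C c * X 0 ^ a * X 1 ^ b := by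
  rw [X_pow_eq_monomial, X_pow_eq_monomial, C_apply, monomial_mul, monomial_mul]
  simp

lemma MonoS_mul {s : ℕ} {A B : MvPolynomial (Fin 2) ℂ} (hA : MonoS s A) (hB : MonoS s B) :
    MonoS s (A * B) := by
  intro m hm
  have := MvPolynomial.support_mul A B hm
  rw [Finset.mem_add] at this
  obtain ⟨u, hu, v, hv, rfl⟩ := this
  obtain ⟨h1, h2⟩ := hA u hu
  obtain ⟨h3, h4⟩ := hB v hv
  constructor <;> simp only [Finsupp.add_apply] <;> exact Nat.dvd_add ‹_› ‹_›

lemma IsHom_deg {φ : MvPolynomial (Fin 2) ℂ} {n : ℕ} (h : φ.IsHomogeneous n)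
    {d : Fin 2 →₀ ℕ} (hd : d ∈ φ.support) : d 0 + d 1 = n := by
  have := h (MvPolynomial.mem_support_iff.mp hd)
  change (Finsupp.weight (fun _ => (1:ℕ))) d = n at this
  rw [← Finsupp.degree_eq_weight_one, deg2] at this
  exact this

lemma homComp_mul {e c : ℕ} {D q : MvPolynomial (Fin 2) ℂ} (hD : D.IsHomogeneous e) :
    homogeneousComponent (e + c) (D * q) = D * homogeneousComponent c q := by
  ext d
  rw [coeff_homogeneousComponent, MvPolynomial.coeff_mul, MvPolynomial.coeff_mul]
  simp only [coeff_homogeneousComponent]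
  by_cases hd : d.degree = e + c
  · rw [if_pos hd]
    refine Finset.sum_congr rfl ?_
    rintro ⟨u, v⟩ huv
    rw [Finset.HasAntidiagonal.mem_antidiagonal] at huv
    by_cases hu : coeff u D = 0
    · simp [hu]
    · have hue : u 0 + u 1 = e := IsHom_deg hD (mem_support_iff.mpr hu)
      have : v.degree = c := by
        rw [deg2]
        have hd2 : d 0 + d 1 = e + c := by rw [← deg2, hd]
        have : u 0 + v 0 = d 0 := by rw [← huv]; simp
        have : u 1 + v 1 = d 1 := by rw [← huv]; simp
        omega
      rw [if_pos this]
  · rw [if_neg hd]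
    refine (Finset.sum_eq_zero ?_).symm
    rintro ⟨u, v⟩ huv
    rw [Finset.HasAntidiagonal.mem_antidiagonal] at huv
    by_cases hu : coeff u D = 0
    · simp [hu]
    by_cases hv : v.degree = c
    · exfalso
      apply hd
      have hue : u 0 + u 1 = e := IsHom_deg hD (mem_support_iff.mpr hu)
      rw [deg2] at hv ⊢
      have : u 0 + v 0 = d 0 := by rw [← huv]; simp
      have : u 1 + v 1 = d 1 := by rw [← huv]; simp
      omega
    · rw [if_neg hv, mul_zero]

lemma exists_hom_factor {D p : MvPolynomial (Fin 2) ℂ} {e d : ℕ} (hD : D.IsHomogeneous e)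
    (hp : p.IsHomogeneous d) (hp0 : p ≠ 0) (hdvd : D ∣ p) :
    e ≤ d ∧ ∃ q, p = D * q ∧ q.IsHomogeneous (d - e) := by
  obtain ⟨q, rfl⟩ := hdvd
  have hed : e ≤ d := by
    obtain ⟨m, hm⟩ := (MvPolynomial.support_nonempty.mpr hp0)
    have hmd : m 0 + m 1 = d := IsHom_deg hp hm
    have hm0 : coeff m (D * q) ≠ 0 := mem_support_iff.mp hm
    rw [MvPolynomial.coeff_mul] at hm0
    obtain ⟨⟨u, v⟩, huv, hne⟩ := Finset.exists_ne_zero_of_sum_ne_zero hm0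
    rw [Finset.HasAntidiagonal.mem_antidiagonal] at huv
    have hu : coeff u D ≠ 0 := fun h => hne (by simp [h])
    have hue : u 0 + u 1 = e := IsHom_deg hD (mem_support_iff.mpr hu)
    have : u 0 + v 0 = m 0 := by rw [← huv]; simp
    have : u 1 + v 1 = m 1 := by rw [← huv]; simp
    omega
  refine ⟨hed, homogeneousComponent (d - e) q, ?_, homogeneousComponent_isHomogeneous _ _⟩
  have h1 : homogeneousComponent d (D * q) = D * q := by
    rw [homogeneousComponent_of_mem ((mem_homogeneousSubmodule _ _).mpr hp), if_pos rfl]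
  calc D * q = homogeneousComponent d (D * q) := h1.symm
    _ = homogeneousComponent (e + (d - e)) (D * q) := by rw [Nat.add_sub_cancel' hed]
    _ = D * homogeneousComponent (d - e) q := homComp_mul hD

lemma sigma_exists {s m : ℕ} (hs : 0 < s) {P : MvPolynomial (Fin 2) ℂ}
    (hP : P.IsHomogeneous m) :
    ∃ p : Fin s → MvPolynomial (Fin 2) ℂ, IsSigma s m P p := by
  classical
  set g : (Fin 2 →₀ ℕ) → Fin s := fun m' => ⟨m' 0 % s, Nat.mod_lt _ hs⟩ with hg
  refine ⟨fun i => ∑ m' ∈ P.support.filter (fun m' => g m' = i),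
      monomial (m' - (Finsupp.single 0 i.val + Finsupp.single 1 ((m - i.val) % s)))
        (coeff m' P), ?_, ?_⟩
  · intro i
    -- facts holder
    have key : ∀ m' ∈ P.support.filter (fun m' => g m' = i),
        m' 0 % s = i.val ∧ m' 0 + m' 1 = m ∧ i.val ≤ m' 0 ∧ (m - i.val) % s = m' 1 % s := by
      intro m' hm'
      rw [Finset.mem_filter] at hm'
      have ha : m' 0 % s = i.val := by
        have := hm'.2
        rw [hg] at this
        exact congrArg Fin.val this
      have hab : m' 0 + m' 1 = m := IsHom_deg hP hm'.1
      have hia : i.val ≤ m' 0 := ha ▸ Nat.mod_le _ _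
      refine ⟨ha, hab, hia, ?_⟩
      have h2 : s * (m' 0 / s) + m' 0 % s = m' 0 := Nat.div_add_mod _ _
      have : m - i.val = s * (m' 0 / s) + m' 1 := by omega
      rw [this, Nat.mul_add_mod]
    constructor
    · apply IsHomogeneous.sum
      intro m' hm'
      obtain ⟨ha, hab, hia, hr⟩ := key m' hm'
      apply isHomogeneous_monomial
      rw [deg2]
      simp only [Finsupp.tsub_apply, Finsupp.add_apply, Finsupp.single_eq_same,
        Finsupp.single_eq_of_ne (by decide : (0:Fin 2) ≠ 1),
        Finsupp.single_eq_of_ne (by decide : (1:Fin 2) ≠ 0), add_zero, zero_add]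
      have hX : s * ((m - i.val) / s) + (m - i.val) % s = m - i.val := Nat.div_add_mod _ _
      have hB : s * (m' 1 / s) + m' 1 % s = m' 1 := Nat.div_add_mod _ _
      generalize s * ((m - i.val) / s) = X at *
      generalize s * (m' 1 / s) = B at *
      omega
    constructor
    · intro d hd
      have hd' := MvPolynomial.support_sum hd
      rw [Finset.mem_biUnion] at hd'
      obtain ⟨m', hm', hdm⟩ := hd'
      obtain ⟨ha, hab, hia, hr⟩ := key m' hm'
      have := MvPolynomial.support_monomial_subset hdm
      rw [Finset.mem_singleton] at this
      subst this
      simp only [Finsupp.tsub_apply, Finsupp.add_apply, Finsupp.single_eq_same,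
        Finsupp.single_eq_of_ne (by decide : (0:Fin 2) ≠ 1),
        Finsupp.single_eq_of_ne (by decide : (1:Fin 2) ≠ 0), add_zero, zero_add]
      have h2 : s * (m' 0 / s) + m' 0 % s = m' 0 := Nat.div_add_mod _ _
      have hB : s * (m' 1 / s) + m' 1 % s = m' 1 := Nat.div_add_mod _ _
      constructor
      · exact ⟨m' 0 / s, by omega⟩
      · exact ⟨m' 1 / s, by omega⟩
    · intro him
      refine Finset.sum_eq_zero fun m' hm' => ?_
      exfalso
      obtain ⟨ha, hab, hia, hr⟩ := key m' hm'
      omega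
  · nth_rewrite 1 [MvPolynomial.as_sum P]
    rw [← Finset.sum_fiberwise_of_maps_to (g := g) (t := Finset.univ)
      (fun x _ => Finset.mem_univ (g x))]
    refine Finset.sum_congr rfl ?_
    intro i _
    rw [Finset.mul_sum]
    refine Finset.sum_congr rfl ?_
    intro m' hm'
    rw [Finset.mem_filter] at hm'
    have ha : m' 0 % s = i.val := congrArg Fin.val hm'.2
    have hab : m' 0 + m' 1 = m := IsHom_deg hP hm'.1
    have hia : i.val ≤ m' 0 := ha ▸ Nat.mod_le _ _
    have hr : (m - i.val) % s = m' 1 % s := by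
      have h2 : s * (m' 0 / s) + m' 0 % s = m' 0 := Nat.div_add_mod _ _
      have : m - i.val = s * (m' 0 / s) + m' 1 := by omega
      rw [this, Nat.mul_add_mod]
    have hrb : (m - i.val) % s ≤ m' 1 := hr ▸ Nat.mod_le _ _
    set off := Finsupp.single (0 : Fin 2) i.val + Finsupp.single 1 ((m - i.val) % s) with hoff
    have hle : off ≤ m' := by
      rw [Finsupp.le_def]
      rw [Fin.forall_fin_two]
      constructor <;>
        simp only [hoff, Finsupp.add_apply, Finsupp.single_eq_same,
          Finsupp.single_eq_of_ne (by decide : (0:Fin 2) ≠ 1),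
          Finsupp.single_eq_of_ne (by decide : (1:Fin 2) ≠ 0), add_zero, zero_add] <;>
        omega
    have hm'eq : off + (m' - off) = m' := add_tsub_cancel_of_le hle
    calc (monomial m') (coeff m' P) = monomial (off + (m' - off)) (1 * coeff m' P) := by
          rw [hm'eq, one_mul]
      _ = monomial off 1 * monomial (m' - off) (coeff m' P) := (monomial_mul).symm
      _ = X 0 ^ i.val * X 1 ^ ((m - i.val) % s) * monomial (m' - off) (coeff m' P) := by
          rw [mono2, map_one, one_mul]

noncomputable def Hs (s n : ℕ) (f : Polynomial ℂ) : MvPolynomial (Fin 2) ℂ :=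
  ∑ j ∈ Finset.range (n + 1),
    monomial (Finsupp.single 0 (s * j) + Finsupp.single 1 (s * (n - j))) (f.coeff j)

lemma Hs_hom (s n : ℕ) (f : Polynomial ℂ) : (Hs s n f).IsHomogeneous (s * n) := by
  apply IsHomogeneous.sum
  intro j hj
  rw [Finset.mem_range] at hj
  apply isHomogeneous_monomial
  rw [deg2]
  simp only [Finsupp.add_apply, Finsupp.single_eq_same,
    Finsupp.single_eq_of_ne (by decide : (0:Fin 2) ≠ 1),
    Finsupp.single_eq_of_ne (by decide : (1:Fin 2) ≠ 0), add_zero, zero_add]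
  rw [← Nat.mul_add]
  congr 1
  omega

lemma Hs_mono (s n : ℕ) (f : Polynomial ℂ) : MonoS s (Hs s n f) := by
  intro d hd
  have hd' := MvPolynomial.support_sum hd
  rw [Finset.mem_biUnion] at hd'
  obtain ⟨j, hj, hdm⟩ := hd'
  have := MvPolynomial.support_monomial_subset hdm
  rw [Finset.mem_singleton] at this
  subst this
  simp only [Finsupp.add_apply, Finsupp.single_eq_same,
    Finsupp.single_eq_of_ne (by decide : (0:Fin 2) ≠ 1),
    Finsupp.single_eq_of_ne (by decide : (1:Fin 2) ≠ 0), add_zero, zero_add]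
  exact ⟨Dvd.intro _ rfl, Dvd.intro _ rfl⟩

lemma Hs_mul {f g : Polynomial ℂ} {s n m : ℕ} (hf : f.natDegree ≤ n) (hg : g.natDegree ≤ m) :
    Hs s (n + m) (f * g) = Hs s n f * Hs s m g := by
  classical
  set T : ℕ × ℕ → MvPolynomial (Fin 2) ℂ := fun jk =>
    monomial (Finsupp.single 0 (s * (jk.1 + jk.2)) +
      Finsupp.single 1 (s * ((n + m) - (jk.1 + jk.2)))) (f.coeff jk.1 * g.coeff jk.2) with hT
  have hLHS : Hs s (n + m) (f * g)
      = ∑ x ∈ (Finset.range (n + m + 1)).sigma (fun l => Finset.HasAntidiagonal.antidiagonal l), T x.2 := by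
    calc Hs s (n + m) (f * g)
        = ∑ l ∈ Finset.range (n + m + 1), ∑ jk ∈ Finset.HasAntidiagonal.antidiagonal l, T jk := by
          rw [Hs]
          refine Finset.sum_congr rfl fun l hl => ?_
          rw [Polynomial.coeff_mul, map_sum]
          refine Finset.sum_congr rfl fun jk hjk => ?_
          rw [Finset.HasAntidiagonal.mem_antidiagonal] at hjk
          simp only [hT]
          rw [hjk]
      _ = _ := Finset.sum_sigma' (Finset.range (n + m + 1))
            (fun l => Finset.HasAntidiagonal.antidiagonal l) (fun _ jk => T jk)
  have hRHS : Hs s n f * Hs s m g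
      = ∑ x ∈ Finset.range (n + 1) ×ˢ Finset.range (m + 1), T x := by
    rw [Hs, Hs, Finset.sum_mul_sum, ← Finset.sum_product']
    refine Finset.sum_congr rfl fun jk hjk => ?_
    rw [Finset.mem_product] at hjk
    rw [Finset.mem_range, Finset.mem_range] at hjk
    obtain ⟨hj1, hj2⟩ := hjk
    rw [monomial_mul]
    simp only [hT]
    congr 1
    have e0 : s * jk.1 + s * jk.2 = s * (jk.1 + jk.2) := (Nat.mul_add s _ _).symm
    have e1 : s * (n - jk.1) + s * (m - jk.2) = s * ((n + m) - (jk.1 + jk.2)) := by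
      rw [← Nat.mul_add]
      congr 1
      omega
    rw [← e0, ← e1, Finsupp.single_add, Finsupp.single_add]
    abel
  rw [hLHS, hRHS]
  have h1 : ∑ x ∈ (Finset.range (n + m + 1)).sigma (fun l => Finset.HasAntidiagonal.antidiagonal l), T x.2
      = ∑ x ∈ ((Finset.range (n + m + 1) ×ˢ Finset.range (n + m + 1)).filter
          fun jk => jk.1 + jk.2 ≤ n + m), T x := by
    refine Finset.sum_nbij' (i := fun x => x.2) (j := fun jk => ⟨jk.1 + jk.2, jk⟩)
      ?_ ?_ ?_ ?_ ?_
    · rintro ⟨l, jk⟩ ha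
      simp only [Finset.mem_sigma, Finset.mem_range, Finset.HasAntidiagonal.mem_antidiagonal] at ha
      simp only [Finset.mem_filter, Finset.mem_product, Finset.mem_range]
      omega
    · rintro ⟨j, k⟩ ha
      simp only [Finset.mem_filter, Finset.mem_product, Finset.mem_range] at ha
      simp only [Finset.mem_sigma, Finset.mem_range, Finset.HasAntidiagonal.mem_antidiagonal]
      exact ⟨by omega, trivial⟩
    · rintro ⟨l, jk⟩ ha
      simp only [Finset.mem_sigma, Finset.mem_range, Finset.HasAntidiagonal.mem_antidiagonal] at ha
      obtain ⟨h1, h2⟩ := ha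
      subst h2
      rfl
    · rintro ⟨j, k⟩ _
      rfl
    · rintro ⟨l, jk⟩ _
      rfl
  rw [h1]
  refine (Finset.sum_subset ?_ ?_).symm
  · rintro ⟨j, k⟩ ha
    simp only [Finset.mem_product, Finset.mem_range] at ha
    simp only [Finset.mem_filter, Finset.mem_product, Finset.mem_range]
    omega
  · rintro ⟨j, k⟩ ha hb
    simp only [Finset.mem_filter, Finset.mem_product, Finset.mem_range] at ha
    simp only [Finset.mem_product, Finset.mem_range] at hb
    have : f.coeff j * g.coeff k = 0 := by
      rcases (by omega : n < j ∨ m < k) with h | h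
      · rw [Polynomial.coeff_eq_zero_of_natDegree_lt (lt_of_le_of_lt hf h), zero_mul]
      · rw [Polynomial.coeff_eq_zero_of_natDegree_lt (lt_of_le_of_lt hg h), mul_zero]
    rw [hT]
    simp only
    rw [this, map_zero]

lemma exists_Hs {s t : ℕ} (hs : 0 < s) {D : MvPolynomial (Fin 2) ℂ}
    (hD : D.IsHomogeneous (s * t)) (hM : MonoS s D) :
    ∃ f : Polynomial ℂ, f.natDegree ≤ t ∧ D = Hs s t f ∧ (f = 0 → D = 0) := by
  classical
  set v : ℕ → (Fin 2 →₀ ℕ) := fun j =>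
    Finsupp.single 0 (s * j) + Finsupp.single 1 (s * (t - j)) with hv
  have hv0 : ∀ j, v j 0 = s * j := fun j => by
    simp only [hv, Finsupp.add_apply, Finsupp.single_eq_same,
      Finsupp.single_eq_of_ne' (by decide : (1:Fin 2) ≠ 0), add_zero]
  have hv1 : ∀ j, v j 1 = s * (t - j) := fun j => by
    simp only [hv, Finsupp.add_apply, Finsupp.single_eq_same,
      Finsupp.single_eq_of_ne' (by decide : (0:Fin 2) ≠ 1), zero_add]
  set f : Polynomial ℂ := ∑ j ∈ Finset.range (t + 1),
    Polynomial.monomial j (coeff (v j) D) with hf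
  have hcoeff : ∀ j ∈ Finset.range (t + 1), f.coeff j = coeff (v j) D := by
    intro j hj
    rw [hf, Polynomial.finset_sum_coeff]
    rw [Finset.sum_eq_single j (fun b _ hb => by
      rw [Polynomial.coeff_monomial, if_neg hb]) (fun h => absurd hj h)]
    rw [Polynomial.coeff_monomial, if_pos rfl]
  have hsupp : ∀ d ∈ D.support, d = v (d 0 / s) ∧ d 0 / s ≤ t := by
    intro d hd
    obtain ⟨hd0, hd1⟩ := hM d hd
    have hdeg : d 0 + d 1 = s * t := IsHom_deg hD hd
    obtain ⟨a, ha⟩ := hd0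
    obtain ⟨b, hb⟩ := hd1
    have hab : a + b = t := by
      have : s * a + s * b = s * t := by rw [← ha, ← hb]; exact hdeg
      rw [← Nat.mul_add] at this
      exact Nat.eq_of_mul_eq_mul_left hs this
    have hda : d 0 / s = a := by rw [ha]; exact Nat.mul_div_cancel_left a hs
    constructor
    · ext i
      fin_cases i
      · show d 0 = v (d 0 / s) 0
        rw [hv0, hda, ha]
      · show d 1 = v (d 0 / s) 1
        rw [hv1, hda, hb]
        congr 1
        omega
    · omega
  refine ⟨f, ?_, ?_, ?_⟩
  · rw [hf]
    apply Polynomial.natDegree_sum_le_of_forall_le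
    intro j hj
    rw [Finset.mem_range] at hj
    refine le_trans (Polynomial.natDegree_monomial_le _) (by omega)
  · rw [Hs]
    ext d
    rw [MvPolynomial.coeff_sum]
    have step : ∀ j ∈ Finset.range (t + 1),
        coeff d (monomial (Finsupp.single 0 (s * j) + Finsupp.single 1 (s * (t - j)))
          (f.coeff j)) = if v j = d then coeff (v j) D else 0 := by
      intro j hj
      rw [MvPolynomial.coeff_monomial, hcoeff j hj]
    rw [Finset.sum_congr rfl step]
    by_cases hex : ∃ j ∈ Finset.range (t + 1), v j = d
    · obtain ⟨j0, hj0, hvj0⟩ := hex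
      rw [Finset.sum_eq_single j0 (fun b hb hbj => ?_) (fun h => absurd hj0 h)]
      · rw [if_pos hvj0, hvj0]
      · rw [if_neg]
        intro hvb
        apply hbj
        have : s * b = s * j0 := by rw [← hv0 b, ← hv0 j0, hvb, hvj0]
        exact Nat.eq_of_mul_eq_mul_left hs this
    · push_neg at hex
      rw [Finset.sum_eq_zero (fun j hj => by rw [if_neg (hex j hj)])]
      by_contra hne
      have hd : d ∈ D.support := mem_support_iff.mpr hne
      obtain ⟨hdv, hdt⟩ := hsupp d hd
      exact hex (d 0 / s) (Finset.mem_range.mpr (by omega)) hdv.symm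
  · intro hf0
    -- if f = 0 then all relevant coeffs of D vanish, so D = 0
    ext d
    rw [MvPolynomial.coeff_zero]
    by_contra hne
    have hd : d ∈ D.support := mem_support_iff.mpr hne
    obtain ⟨hdv, hdt⟩ := hsupp d hd
    have := hcoeff (d 0 / s) (Finset.mem_range.mpr (by omega))
    rw [hf0] at this
    simp only [Polynomial.coeff_zero] at this
    rw [← hdv] at this
    exact hne this.symm

lemma list_prod_X_sub_C (L : List ℂ) :
    ((L.map fun a => Polynomial.X - Polynomial.C a).prod).Monic ∧
    ((L.map fun a => Polynomial.X - Polynomial.C a).prod).natDegree = L.length := by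
  induction L with
  | nil => simp [Polynomial.monic_one]
  | cons a L ih =>
    simp only [List.map_cons, List.prod_cons, List.length_cons]
    have hm : (Polynomial.X - Polynomial.C a).Monic := Polynomial.monic_X_sub_C a
    refine ⟨hm.mul ih.1, ?_⟩
    rw [Polynomial.natDegree_mul hm.ne_zero ih.1.ne_zero, Polynomial.natDegree_X_sub_C, ih.2]
    omega

lemma poly_split (f : Polynomial ℂ) (hf : f ≠ 0) (n u : ℕ) (hn : f.natDegree ≤ n)
    (hu : u ≤ n) :
    ∃ g h : Polynomial ℂ, f = g * h ∧ g.natDegree ≤ u ∧ h.natDegree ≤ n - u := by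
  have hsplits : Polynomial.Splits f := IsAlgClosed.splits f
  have hcard : f.roots.card = f.natDegree := (Polynomial.splits_iff_card_roots).mp hsplits
  set L := f.roots.toList with hL
  have hLlen : L.length = f.natDegree := by rw [hL, Multiset.length_toList, hcard]
  have hfactor : f = Polynomial.C f.leadingCoeff *
      ((L.map fun a => Polynomial.X - Polynomial.C a).prod) := by
    conv_lhs => rw [hsplits.eq_prod_roots]
    congr 1
    rw [← Multiset.coe_toList f.roots, ← hL, Multiset.map_coe, Multiset.prod_coe]
  set b := min u f.natDegree with hb
  refine ⟨((L.take b).map fun a => Polynomial.X - Polynomial.C a).prod,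
    Polynomial.C f.leadingCoeff * ((L.drop b).map fun a => Polynomial.X - Polynomial.C a).prod,
    ?_, ?_, ?_⟩
  · conv_lhs => rw [hfactor, ← List.take_append_drop b L]
    rw [List.map_append, List.prod_append]
    ring
  · rw [(list_prod_X_sub_C _).2, List.length_take]
    omega
  · rw [Polynomial.natDegree_C_mul (Polynomial.leadingCoeff_ne_zero.mpr hf),
      (list_prod_X_sub_C _).2, List.length_drop]
    omega

lemma hom_monos_dvd {s e : ℕ} {D : MvPolynomial (Fin 2) ℂ} (hD0 : D ≠ 0)
    (hD : D.IsHomogeneous e) (hM : MonoS s D) : s ∣ e := by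
  obtain ⟨m', hm'⟩ := MvPolynomial.support_nonempty.mpr hD0
  obtain ⟨h1, h2⟩ := hM m' hm'
  exact (IsHom_deg hD hm') ▸ Nat.dvd_add h1 h2

lemma split_hom {s t u : ℕ} (hs : 0 < s) {D : MvPolynomial (Fin 2) ℂ} (hD0 : D ≠ 0)
    (hD : D.IsHomogeneous (s * t)) (hM : MonoS s D) (hu : u ≤ t) :
    ∃ Q E : MvPolynomial (Fin 2) ℂ, D = Q * E ∧ Q.IsHomogeneous (s * u) ∧ MonoS s Q ∧
      E.IsHomogeneous (s * (t - u)) := by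
  obtain ⟨f, hfd, hDf, hf0⟩ := exists_Hs hs hD hM
  have hfne : f ≠ 0 := fun h => hD0 (hf0 h)
  obtain ⟨g, h, hfgh, hgd, hhd⟩ := poly_split f hfne t u hfd hu
  have h3 : u + (t - u) = t := by omega
  have h2 := Hs_mul (s := s) hgd hhd
  rw [h3] at h2
  exact ⟨Hs s u g, Hs s (t - u) h, by rw [hDf, hfgh, h2], Hs_hom _ _ _, Hs_mono _ _ _,
    Hs_hom _ _ _⟩

theorem stmt_6 (k1 k2 s1 : ℕ) (hk1 : 1 ≤ k1) (hk2 : 1 ≤ k2) (hs1 : 1 ≤ s1)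
    (K : ℕ) (hK : K = k1 + s1 * (k2 - 1))
    (P : MvPolynomial (Fin 2) ℂ) (hP : P.IsHomogeneous (K - 1)) :
    P ∈ Fset 2 (fun i => if i = 0 then k1 else k2) (fun i => if i = 0 then s1 else 1) ↔
    ∃ (D : MvPolynomial (Fin 2) ℂ) (e : ℕ) (p : Fin s1 → MvPolynomial (Fin 2) ℂ),
      s1 * (k2 - 1) ≤ e ∧ D.IsHomogeneous e ∧ MonoS s1 D ∧
      IsSigma s1 (K - 1) P p ∧ ∀ i, D ∣ p i := by
  have hs1' : 0 < s1 := hs1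
  have hSp0 : Sp (fun i => if i = 0 then s1 else 1) 0 = 1 := by
    simp [Sp]
  have hSp1 : Sp (fun i => if i = 0 then s1 else 1) 1 = s1 := by
    simp [Sp]
  constructor
  · -- forward
    rintro ⟨Q, hPQ, hQ⟩
    have hprod : P = Q 0 * Q 1 := by
      rw [hPQ, Finset.prod_range_succ, Finset.prod_range_one]
    have hQ0 : (Q 0).IsHomogeneous (k1 - 1) := by
      have h := (hQ 0 (by omega)).1
      simp only [reduceIte, hSp0, one_mul] at h
      exact h
    have hQ1hom : (Q 1).IsHomogeneous (s1 * (k2 - 1)) := by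
      have h := (hQ 1 (by omega)).1
      simp only [reduceIte, hSp1] at h
      exact h
    have hQ1mono : MonoS s1 (Q 1) := by
      have h := (hQ 1 (by omega)).2
      simp only [reduceIte, hSp1] at h
      exact h
    obtain ⟨q, hq1, hq2⟩ := sigma_exists (s := s1) hs1' hQ0
    refine ⟨Q 1, s1 * (k2 - 1), fun i => q i * Q 1, le_refl _, hQ1hom, hQ1mono, ⟨?_, ?_⟩,
      fun i => dvd_mul_left _ _⟩
    · intro i
      show (q i * Q 1).IsHomogeneous (s1 * ((K - 1 - i.val) / s1)) ∧
        MonoS s1 (q i * Q 1) ∧ (K - 1 < i.val → q i * Q 1 = 0)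
      by_cases hqi : q i = 0
      · refine ⟨?_, ?_, fun _ => by rw [hqi, zero_mul]⟩
        · rw [hqi, zero_mul]; exact isHomogeneous_zero _ _ _
        · rw [hqi, zero_mul]; intro m hm; simp at hm
      · have hik : i.val ≤ k1 - 1 := by
          by_contra h
          exact hqi ((hq1 i).2.2 (by omega))
        have hKk : K - 1 - i.val = (k1 - 1 - i.val) + s1 * (k2 - 1) := by omega
        refine ⟨?_, MonoS_mul (hq1 i).2.1 hQ1mono, fun him => absurd him (by omega)⟩
        have harith : s1 * ((k1 - 1 - i.val) / s1) + s1 * (k2 - 1)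
            = s1 * ((K - 1 - i.val) / s1) := by
          rw [hKk, Nat.add_mul_div_left _ _ hs1', Nat.mul_add]
        have := (hq1 i).1.mul hQ1hom
        rwa [harith] at this
    · rw [hprod, hq2, Finset.sum_mul]
      refine Finset.sum_congr rfl fun i _ => ?_
      show X 0 ^ i.val * X 1 ^ ((k1 - 1 - i.val) % s1) * q i * Q 1
        = X 0 ^ i.val * X 1 ^ ((K - 1 - i.val) % s1) * (q i * Q 1)
      by_cases hqi : q i = 0
      · rw [hqi]; ring
      · have hik : i.val ≤ k1 - 1 := by
          by_contra h
          exact hqi ((hq1 i).2.2 (by omega))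
        have hKk : K - 1 - i.val = (k1 - 1 - i.val) + s1 * (k2 - 1) := by omega
        have hmod : (K - 1 - i.val) % s1 = (k1 - 1 - i.val) % s1 := by
          rw [hKk, Nat.add_mul_mod_self_left]
        rw [hmod]
        ring
  · -- backward
    rintro ⟨D, e, p, he, hDhom, hDmono, ⟨hps, hPsum⟩, hdvd⟩
    by_cases hD0 : D = 0
    · have hp0 : ∀ i, p i = 0 := fun i => zero_dvd_iff.mp (hD0 ▸ hdvd i)
      have hP0 : P = 0 := by
        rw [hPsum]
        refine Finset.sum_eq_zero fun i _ => by rw [hp0 i, mul_zero]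
      refine ⟨fun j => if j = 0 then 0 else X 1 ^ (s1 * (k2 - 1)), ?_, ?_⟩
      · rw [Finset.prod_range_succ, Finset.prod_range_one]
        simp only [reduceIte, zero_mul]
        exact hP0
      · intro i hi
        interval_cases i
        · simp only [reduceIte, hSp0, one_mul]
          exact ⟨isHomogeneous_zero _ _ _, fun m hm => by simp at hm⟩
        · simp only [reduceIte, hSp1]
          refine ⟨isHomogeneous_X_pow _ _, ?_⟩
          intro m hm
          have := MvPolynomial.support_X_pow (R := ℂ) 1 (s1 * (k2 - 1))
          rw [X_pow_eq_monomial] at hm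
          have hm' := MvPolynomial.support_monomial_subset hm
          rw [Finset.mem_singleton] at hm'
          subst hm'
          constructor
          · rw [Finsupp.single_eq_of_ne' (by decide : (1:Fin 2) ≠ 0)]
            exact dvd_zero _
          · rw [Finsupp.single_eq_same]
            exact Dvd.intro _ rfl
    · obtain ⟨t, het⟩ := hom_monos_dvd hD0 hDhom hDmono
      have hut : k2 - 1 ≤ t := by
        have : s1 * (k2 - 1) ≤ s1 * t := by omega
        exact Nat.le_of_mul_le_mul_left this hs1'
      obtain ⟨Q1, E, hDQE, hQ1hom, hQ1mono, hEhom⟩ :=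
        split_hom hs1' hD0 (het ▸ hDhom) hDmono hut
      have key : ∀ i : Fin s1, ∃ qi, p i = D * qi ∧ (p i ≠ 0 →
          qi.IsHomogeneous (s1 * ((K - 1 - i.val) / s1) - e) ∧
          e ≤ s1 * ((K - 1 - i.val) / s1)) := by
        intro i
        by_cases hpi : p i = 0
        · exact ⟨0, by rw [hpi, mul_zero], fun h => absurd hpi h⟩
        · obtain ⟨hed, qi, hq1, hq2⟩ := exists_hom_factor hDhom (hps i).1 hpi (hdvd i)
          exact ⟨qi, hq1, fun _ => ⟨hq2, hed⟩⟩
      choose q' hq'1 hq'2 using key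
      refine ⟨fun j => if j = 0 then
        (∑ i : Fin s1, X 0 ^ i.val * X 1 ^ ((K - 1 - i.val) % s1) * (E * q' i))
        else Q1, ?_, ?_⟩
      · rw [Finset.prod_range_succ, Finset.prod_range_one]
        show P = (∑ i : Fin s1, X 0 ^ i.val * X 1 ^ ((K - 1 - i.val) % s1) * (E * q' i)) * Q1
        rw [hPsum, Finset.sum_mul]
        refine Finset.sum_congr rfl fun i _ => ?_
        rw [hq'1 i, hDQE]
        ring
      · intro i hi
        interval_cases i
        · simp only [reduceIte, hSp0, one_mul]
          constructor
          · apply IsHomogeneous.sum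
            intro i _
            by_cases hpi : p i = 0
            · have hqi : q' i = 0 := by
                have := hq'1 i
                rw [hpi] at this
                exact (mul_eq_zero.mp this.symm).resolve_left hD0
              rw [hqi, mul_zero, mul_zero]
              exact isHomogeneous_zero _ _ _
            · obtain ⟨hqh, hed⟩ := hq'2 i hpi
              have hiK : i.val ≤ K - 1 := by
                by_contra h
                exact hpi ((hps i).2.2 (by omega))
              have f1 : s1 * ((K - 1 - i.val) / s1) + (K - 1 - i.val) % s1
                  = K - 1 - i.val := Nat.div_add_mod _ _
              have f3 : s1 * (t - (k2 - 1)) + s1 * (k2 - 1) = s1 * t := by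
                rw [← Nat.mul_add]
                congr 1
                omega
              have hdeg := ((isHomogeneous_X_pow (R := ℂ) 0 i.val).mul
                (isHomogeneous_X_pow (R := ℂ) 1 ((K - 1 - i.val) % s1))).mul
                (hEhom.mul hqh)
              have harith : i.val + (K - 1 - i.val) % s1 +
                  (s1 * (t - (k2 - 1)) + (s1 * ((K - 1 - i.val) / s1) - e)) = k1 - 1 := by
                omega
              rwa [harith] at hdeg
          · intro m hm
            exact ⟨one_dvd _, one_dvd _⟩
        · simp only [reduceIte, hSp1]
          exact ⟨hQ1hom, hQ1mono⟩

end Helpers
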